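/- Let S be a finite nonempty set of points in ℝ^d and define the set of good points G = {x ∈ S : L(S, x) ≤ 3·L(S)}, where L(S, x) = Σ_{s∈S} ‖s − x‖² and L(S) is the cost with the mean of S as center. Then |G| ≥ |S|/2. -/

import Mathlib

open scoped Classical

/-- At least half of the points of a finite set `S` are "good", i.e. satisfy
`L(S, x) ≤ 3·L(S)` where `L(S)` is the cost with the mean of `S` as center. -/
theorem good_points_half {d : ℕ} (S : Finset (EuclideanSpace ℝ (Fin d))) (hS : S.Nonempty)
    (μ : EuclideanSpace ℝ (Fin d)) (hμ : μ = (S.card : ℝ)⁻¹ • ∑ x ∈ S, x)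
    (G : Finset (EuclideanSpace ℝ (Fin d)))
    (hG : G = S.filter fun x => ∑ s ∈ S, ‖s - x‖ ^ 2 ≤ 3 * ∑ s ∈ S, ‖s - μ‖ ^ 2) :
    (S.card : ℝ) / 2 ≤ G.card := by
  have hcard : (0:ℝ) < S.card := by exact_mod_cast Finset.card_pos.mpr hS
  set n : ℝ := (S.card : ℝ) with hn
  set L : ℝ := ∑ s ∈ S, ‖s - μ‖ ^ 2 with hL
  have hsum0 : ∑ s ∈ S, (s - μ) = 0 := by
    rw [Finset.sum_sub_distrib, Finset.sum_const, hμ]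
    rw [← Nat.cast_smul_eq_nsmul ℝ, smul_smul, mul_inv_cancel₀ hcard.ne', one_smul, sub_self]
  have key : ∀ x : EuclideanSpace ℝ (Fin d),
      ∑ s ∈ S, ‖s - x‖ ^ 2 = L + n * ‖x - μ‖ ^ 2 := by
    intro x
    have h1 : ∀ s : EuclideanSpace ℝ (Fin d),
        ‖s - x‖ ^ 2 = ‖s - μ‖ ^ 2 + 2 * (inner ℝ (s - μ) (μ - x) : ℝ) + ‖μ - x‖ ^ 2 := by
      intro s
      have h := norm_add_sq_real (s - μ) (μ - x)
      rw [sub_add_sub_cancel] at h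
      exact h
    rw [Finset.sum_congr rfl (fun s _ => h1 s), Finset.sum_add_distrib,
      Finset.sum_add_distrib, ← Finset.mul_sum, ← sum_inner, hsum0, inner_zero_left,
      Finset.sum_const, nsmul_eq_mul, norm_sub_rev]
    ring
  have hLnn : (0:ℝ) ≤ L := Finset.sum_nonneg fun s _ => sq_nonneg _
  have hGS : G ⊆ S := by rw [hG]; exact Finset.filter_subset _ _
  set B := S \ G with hB
  have hmemB : ∀ x, x ∈ B ↔ x ∈ S ∧ ¬ (∑ s ∈ S, ‖s - x‖ ^ 2 ≤ 3 * L) := by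
    intro x
    rw [hB, Finset.mem_sdiff, hG, Finset.mem_filter]
    tauto
  have hcast : (B.card : ℝ) = n - G.card := by
    rw [hB, Finset.card_sdiff_of_subset hGS, Nat.cast_sub (Finset.card_le_card hGS)]
  rcases eq_or_lt_of_le hLnn with h0 | hLpos
  · have hzero : ∀ x ∈ S, ‖x - μ‖ ^ 2 = 0 := by
      intro x hx
      exact (Finset.sum_eq_zero_iff_of_nonneg
        (fun s _ => sq_nonneg ‖s - μ‖)).mp h0.symm x hx
    have hBe : B = ∅ := by
      rw [Finset.eq_empty_iff_forall_notMem]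
      intro x hx
      rw [hmemB] at hx
      refine hx.2 ?_
      rw [key x, hzero x hx.1]
      linarith
    have : (B.card : ℝ) = 0 := by rw [hBe]; simp
    rw [this] at hcast
    linarith
  · have hBlt : (B.card : ℝ) < n / 2 := by
      rcases B.eq_empty_or_nonempty with hBe | hBne
      · simp [hBe]; linarith
      · have hmem : ∀ x ∈ B, 2 * L < n * ‖x - μ‖ ^ 2 := by
          intro x hx
          have hx2 := ((hmemB x).mp hx).2
          push_neg at hx2
          rw [key x] at hx2
          linarith
        have h1 : 2 * L * B.card < ∑ x ∈ B, n * ‖x - μ‖ ^ 2 := by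
          calc 2 * L * B.card = ∑ _x ∈ B, 2 * L := by
                rw [Finset.sum_const, nsmul_eq_mul]; ring
            _ < _ := Finset.sum_lt_sum_of_nonempty hBne hmem
        have h2 : ∑ x ∈ B, n * ‖x - μ‖ ^ 2 ≤ n * L := by
          rw [← Finset.mul_sum, hL]
          refine mul_le_mul_of_nonneg_left ?_ (le_of_lt hcard)
          exact Finset.sum_le_sum_of_subset_of_nonneg
            (by rw [hB]; exact Finset.sdiff_subset) (fun s _ _ => sq_nonneg _)
        nlinarith
    linarith
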